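/- Let 0 < μ < 1, λ₀ > 0 and t₀ ∈ ℝ, and define u : ℝ → ℝ by u(t) := ((1−μ) λ₀ · max(t₀ − t, 0))^{1/(1−μ)}. Then u is differentiable at every t ∈ ℝ and u′(t) = −λ₀ · u(t)^μ for all t ∈ ℝ. In particular, u vanishes identically for t ≥ t₀ (a dead core forms), and the function (x,t) ↦ u(t) on ℝⁿ × ℝ is a classical solution of |Du|^p F(D²u) − u_t = λ₀ u^μ χ_{{u>0}} for every F with F(0) = 0 and every p ≥ 0. -/

import Mathlib

open Set Metric MeasureTheory Filter Topology

noncomputable section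

attribute [local instance] Matrix.normedAddCommGroup Matrix.normedSpace

/-- Euclidean space `ℝⁿ`. -/
abbrev ESp (n : ℕ) := EuclideanSpace ℝ (Fin n)

variable {n : ℕ}

/-- The Pucci maximal operator `𝒫⁺_{λ,Λ}`. -/
def pucciPlus (lam Lam : ℝ) (X : Matrix (Fin n) (Fin n) ℝ) : ℝ :=
  if hX : X.IsHermitian then
    ∑ i, (lam * min (hX.eigenvalues i) 0 + Lam * max (hX.eigenvalues i) 0)
  else 0

/-- The Pucci minimal operator `𝒫⁻_{λ,Λ}`. -/
def pucciMinus (lam Lam : ℝ) (X : Matrix (Fin n) (Fin n) ℝ) : ℝ :=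
  if hX : X.IsHermitian then
    ∑ i, (lam * max (hX.eigenvalues i) 0 + Lam * min (hX.eigenvalues i) 0)
  else 0

/-- Structural condition (F1): uniform ellipticity with `F(0) = 0`. -/
def CondF1 (lam Lam : ℝ) (F : Matrix (Fin n) (Fin n) ℝ → ℝ) : Prop :=
  F 0 = 0 ∧
  ∀ M N : Matrix (Fin n) (Fin n) ℝ, M.IsHermitian → N.IsHermitian →
    pucciMinus lam Lam (M - N) ≤ F M - F N ∧ F M - F N ≤ pucciPlus lam Lam (M - N)

/-- Structural condition (F2): `F` is convex or concave. -/
def CondF2 (F : Matrix (Fin n) (Fin n) ℝ → ℝ) : Prop :=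
  ConvexOn ℝ univ F ∨ ConcaveOn ℝ univ F

/-- Structural condition (F3): `F ∈ C^{1,κ}` for some `κ ∈ (0,1]`. -/
def CondF3 (F : Matrix (Fin n) (Fin n) ℝ → ℝ) : Prop :=
  ∃ κ ∈ Ioc (0:ℝ) 1, ContDiff ℝ 1 F ∧
    ∃ C : ℝ, ∀ X Y : Matrix (Fin n) (Fin n) ℝ,
      @Norm.norm _ ContinuousLinearMap.hasOpNorm (fderiv ℝ F X - fderiv ℝ F Y) ≤ C * ‖X - Y‖ ^ κ

/-- Spatial gradient `Du` of a function on `ℝⁿ × ℝ`. -/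
def spaceGrad (u : ESp n × ℝ → ℝ) (z : ESp n × ℝ) : ESp n :=
  gradient (fun x => u (x, z.2)) z.1

/-- Spatial Hessian `D²u`, as a matrix, of a function on `ℝⁿ × ℝ`. -/
def spaceHess (u : ESp n × ℝ → ℝ) (z : ESp n × ℝ) : Matrix (Fin n) (Fin n) ℝ :=
  Matrix.of fun i j =>
    iteratedFDeriv ℝ 2 (fun x => u (x, z.2)) z.1
      ![EuclideanSpace.single i (1:ℝ), EuclideanSpace.single j (1:ℝ)]

/-- Time derivative `∂ₜ u` of a function on `ℝⁿ × ℝ`. -/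
def timeDeriv (u : ESp n × ℝ → ℝ) (z : ESp n × ℝ) : ℝ :=
  deriv (fun t => u (z.1, t)) z.2

/-- `φ` touches `u` from above at `z₀` (within `Ω`). -/
def TouchesFromAbove (u φ : ESp n × ℝ → ℝ) (Ω : Set (ESp n × ℝ)) (z₀ : ESp n × ℝ) : Prop :=
  φ z₀ = u z₀ ∧ ∀ᶠ z in nhdsWithin z₀ Ω, u z ≤ φ z

/-- `φ` touches `u` from below at `z₀` (within `Ω`). -/
def TouchesFromBelow (u φ : ESp n × ℝ → ℝ) (Ω : Set (ESp n × ℝ)) (z₀ : ESp n × ℝ) : Prop :=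
  φ z₀ = u z₀ ∧ ∀ᶠ z in nhdsWithin z₀ Ω, φ z ≤ u z

/-- Viscosity subsolution of `|Du|^p F(D²u) - uₜ = rhs (x,t) u` on `Ω`. -/
def ViscSubsol (p : ℝ) (F : Matrix (Fin n) (Fin n) ℝ → ℝ)
    (rhs : ESp n × ℝ → ℝ → ℝ) (Ω : Set (ESp n × ℝ)) (u : ESp n × ℝ → ℝ) : Prop :=
  ∀ φ : ESp n × ℝ → ℝ, ContDiff ℝ 2 φ →
    ∀ z₀ ∈ Ω, TouchesFromAbove u φ Ω z₀ → spaceGrad φ z₀ ≠ 0 →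
      rhs z₀ (u z₀) ≤ ‖spaceGrad φ z₀‖ ^ p * F (spaceHess φ z₀) - timeDeriv φ z₀

/-- Viscosity supersolution of `|Du|^p F(D²u) - uₜ = rhs (x,t) u` on `Ω`. -/
def ViscSupersol (p : ℝ) (F : Matrix (Fin n) (Fin n) ℝ → ℝ)
    (rhs : ESp n × ℝ → ℝ → ℝ) (Ω : Set (ESp n × ℝ)) (u : ESp n × ℝ → ℝ) : Prop :=
  ∀ φ : ESp n × ℝ → ℝ, ContDiff ℝ 2 φ →
    ∀ z₀ ∈ Ω, TouchesFromBelow u φ Ω z₀ → spaceGrad φ z₀ ≠ 0 →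
      ‖spaceGrad φ z₀‖ ^ p * F (spaceHess φ z₀) - timeDeriv φ z₀ ≤ rhs z₀ (u z₀)

/-- Viscosity solution. -/
def ViscSol (p : ℝ) (F : Matrix (Fin n) (Fin n) ℝ → ℝ)
    (rhs : ESp n × ℝ → ℝ → ℝ) (Ω : Set (ESp n × ℝ)) (u : ESp n × ℝ → ℝ) : Prop :=
  ViscSubsol p F rhs Ω u ∧ ViscSupersol p F rhs Ω u

/-- The dead-core right-hand side `λ₀(x,t) s^μ χ_{s>0}`. -/
def dcpRHS (lam₀ : ESp n × ℝ → ℝ) (μ : ℝ) : ESp n × ℝ → ℝ → ℝ :=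
  fun z s => lam₀ z * (if 0 < s then s ^ μ else 0)

/-- `∂ₜ u ≥ g` in the viscosity sense. -/
def ViscTimeDerivGE (g : ESp n × ℝ → ℝ) (Ω : Set (ESp n × ℝ)) (u : ESp n × ℝ → ℝ) : Prop :=
  ∀ φ : ESp n × ℝ → ℝ, ContDiff ℝ 2 φ →
    ∀ z₀ ∈ Ω, TouchesFromBelow u φ Ω z₀ → g z₀ ≤ timeDeriv φ z₀

/-- `∂ₜ u ≤ g` in the viscosity sense. -/
def ViscTimeDerivLE (g : ESp n × ℝ → ℝ) (Ω : Set (ESp n × ℝ)) (u : ESp n × ℝ → ℝ) : Prop :=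
  ∀ φ : ESp n × ℝ → ℝ, ContDiff ℝ 2 φ →
    ∀ z₀ ∈ Ω, TouchesFromAbove u φ Ω z₀ → timeDeriv φ z₀ ≤ g z₀

/-- The intrinsic scaling exponent `θ = (2+p)(1-μ)/(1+p-μ)`. -/
def thetaExp (p μ : ℝ) : ℝ := (2 + p) * (1 - μ) / (1 + p - μ)

/-- The sharp regularity exponent `α = (2+p)/(1+p-μ)`. -/
def alphaExp (p μ : ℝ) : ℝ := (2 + p) / (1 + p - μ)

/-- The intrinsic parabolic distance `dist_p`. -/
def distP (θ : ℝ) (z w : ESp n × ℝ) : ℝ := ‖z.1 - w.1‖ + |z.2 - w.2| ^ (1 / θ)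

/-- Intrinsic parabolic cylinder `Q_r(x₀,t₀)`. -/
def pCyl (θ r : ℝ) (z : ESp n × ℝ) : Set (ESp n × ℝ) :=
  ball z.1 r ×ˢ Ioo (z.2 - r ^ θ) (z.2 + r ^ θ)

/-- Intrinsic parabolic cylinder `Q_r⁻(x₀,t₀)`. -/
def pCylMinus (θ r : ℝ) (z : ESp n × ℝ) : Set (ESp n × ℝ) :=
  ball z.1 r ×ˢ Ioc (z.2 - r ^ θ) z.2

/-- Intrinsic parabolic cylinder `Q_r⁺(x₀,t₀)`. -/
def pCylPlus (θ r : ℝ) (z : ESp n × ℝ) : Set (ESp n × ℝ) :=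
  ball z.1 r ×ˢ Ico z.2 (z.2 + r ^ θ)

/-- Parabolic boundary of `Q_r⁻(x₀,t₀)`. -/
def parBdryCylMinus (θ r : ℝ) (z : ESp n × ℝ) : Set (ESp n × ℝ) :=
  (closedBall z.1 r ×ˢ {z.2 - r ^ θ}) ∪ (sphere z.1 r ×ˢ Ioc (z.2 - r ^ θ) z.2)

/-- Parabolic boundary of `Q × [a,b)`. -/
def parBdry (Q : Set (ESp n)) (a b : ℝ) : Set (ESp n × ℝ) :=
  (closure Q ×ˢ {a}) ∪ (frontier Q ×ˢ Ico a b)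

/-- Positivity set `{u > 0}` inside `Ω`. -/
def posSet (Ω : Set (ESp n × ℝ)) (u : ESp n × ℝ → ℝ) : Set (ESp n × ℝ) :=
  {z ∈ Ω | 0 < u z}



theorem deadcore_hasDerivAt
    (μ lam₀ t₀ : ℝ) (hμ : μ ∈ Ioo (0:ℝ) 1) (hlam₀ : 0 < lam₀)
    (u : ℝ → ℝ) (hu : u = fun t => ((1 - μ) * lam₀ * max (t₀ - t) 0) ^ (1 / (1 - μ))) :
    (∀ t : ℝ, HasDerivAt u (-(lam₀ * u t ^ μ)) t) := by
  obtain ⟨hμ0, hμ1⟩ := hμ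
  have h1μ : (0:ℝ) < 1 - μ := by linarith
  set c : ℝ := (1 - μ) * lam₀ with hc_def
  set α : ℝ := 1 / (1 - μ) with hα_def
  have hc : 0 < c := mul_pos h1μ hlam₀
  have hα1 : 1 < α := by
    rw [hα_def, lt_div_iff₀ h1μ]; linarith
  have hαμ : α - 1 = α * μ := by
    rw [hα_def]; field_simp; ring
  have hcα : c * α = lam₀ := by
    rw [hc_def, hα_def]; field_simp
  have hunn : ∀ t, 0 ≤ u t := by
    intro t; rw [hu]
    exact Real.rpow_nonneg (mul_nonneg hc.le (le_max_right _ _)) _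
  intro t
  rcases lt_trichotomy t t₀ with ht | ht | ht
  · -- t < t₀
    have hf : HasDerivAt (fun s => c * (t₀ - s)) (-c) t := by
      simpa using ((hasDerivAt_id t).const_sub t₀).const_mul c
    have h := hf.rpow_const (p := α) (Or.inr hα1.le)
    have heq : u =ᶠ[𝓝 t] fun s => (c * (t₀ - s)) ^ α := by
      filter_upwards [eventually_lt_nhds ht] with s hs
      rw [hu]
      simp only [max_eq_left (by linarith : (0:ℝ) ≤ t₀ - s)]
    have hx : (0:ℝ) ≤ c * (t₀ - t) := mul_nonneg hc.le (by linarith)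
    have hval : -c * α * (c * (t₀ - t)) ^ (α - 1) = -(lam₀ * u t ^ μ) := by
      rw [hu]
      simp only [max_eq_left (by linarith : (0:ℝ) ≤ t₀ - t)]
      rw [← Real.rpow_mul hx, hαμ, neg_mul, neg_mul, mul_assoc, ← hcα]
      ring
    exact hval ▸ h.congr_of_eventuallyEq heq
  · -- t = t₀
    subst ht
    have hu0 : u t = 0 := by
      rw [hu]; simp [Real.zero_rpow (by positivity : α ≠ 0)]
    have hval : -(lam₀ * u t ^ μ) = 0 := by
      rw [hu0, Real.zero_rpow hμ0.ne', mul_zero, neg_zero]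
    rw [hval, hasDerivAt_iff_tendsto]
    apply squeeze_zero (g := fun s => c ^ α * |s - t| ^ (α - 1))
    · intro s; positivity
    · intro s
      rcases eq_or_ne s t with rfl | hst
      · simp [hu0, Real.zero_rpow (by linarith : α - 1 ≠ 0)]
      · have habs : (0:ℝ) < |s - t| := abs_pos.mpr (sub_ne_zero.mpr hst)
        have hm : max (t - s) 0 ≤ |s - t| := by
          rw [abs_sub_comm]
          exact max_le (le_abs_self _) (abs_nonneg _)
        have hus : u s ≤ c ^ α * |s - t| ^ α := by
          rw [hu]
          calc (c * max (t - s) 0) ^ α ≤ (c * |s - t|) ^ α := by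
                apply Real.rpow_le_rpow (mul_nonneg hc.le (le_max_right _ _))
                  (mul_le_mul_of_nonneg_left hm hc.le) (by positivity)
            _ = c ^ α * |s - t| ^ α := Real.mul_rpow hc.le habs.le
        have : ‖s - t‖⁻¹ * ‖u s - u t - (s - t) • (0:ℝ)‖ = |s - t|⁻¹ * u s := by
          rw [hu0]; simp [Real.norm_eq_abs, abs_of_nonneg (hunn s)]
        rw [this, Real.rpow_sub habs, Real.rpow_one, inv_mul_le_iff₀ habs]
        calc u s ≤ c ^ α * |s - t| ^ α := hus
          _ = |s - t| * (c ^ α * (|s - t| ^ α / |s - t|)) := by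
              field_simp
    · have h1 : Tendsto (fun s : ℝ => |s - t|) (𝓝 t) (𝓝 0) := by
        have : Tendsto (fun s : ℝ => s - t) (𝓝 t) (𝓝 0) :=
          (continuous_id.sub continuous_const).tendsto' t 0 (by simp)
        simpa using this.abs
      have h2 := h1.rpow_const (p := α - 1) (Or.inr (by linarith))
      rw [Real.zero_rpow (by linarith : α - 1 ≠ 0)] at h2
      simpa using h2.const_mul (c ^ α)
  · -- t₀ < t
    have heq : u =ᶠ[𝓝 t] fun _ => (0:ℝ) := by
      filter_upwards [eventually_gt_nhds ht] with s hs
      rw [hu]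
      simp [max_eq_right (by linarith : t₀ - s ≤ 0), Real.zero_rpow (by positivity : α ≠ 0)]
    have hu0 : u t = 0 := heq.self_of_nhds
    have hval : -(lam₀ * u t ^ μ) = 0 := by
      rw [hu0, Real.zero_rpow hμ0.ne', mul_zero, neg_zero]
    rw [hval]
    exact (hasDerivAt_const t 0).congr_of_eventuallyEq heq

/-- **The space-independent dead-core profile** `u(t) = ((1-μ)λ₀ (t₀-t)₊)^{1/(1-μ)}`
solves `u' = -λ₀ u^μ` and generates a classical dead-core solution. -/
theorem space_independent_dead_core_profile
    (n : ℕ) (μ lam₀ t₀ : ℝ) (hμ : μ ∈ Ioo (0:ℝ) 1) (hlam₀ : 0 < lam₀)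
    (u : ℝ → ℝ) (hu : u = fun t => ((1 - μ) * lam₀ * max (t₀ - t) 0) ^ (1 / (1 - μ))) :
    (∀ t : ℝ, HasDerivAt u (-(lam₀ * u t ^ μ)) t) ∧
    (∀ t : ℝ, t₀ ≤ t → u t = 0) ∧
    (∀ (F : Matrix (Fin n) (Fin n) ℝ → ℝ), F 0 = 0 → ∀ p : ℝ, 0 ≤ p →
      ∀ z : ESp n × ℝ,
        ‖spaceGrad (fun w : ESp n × ℝ => u w.2) z‖ ^ p *
            F (spaceHess (fun w : ESp n × ℝ => u w.2) z)
          - timeDeriv (fun w : ESp n × ℝ => u w.2) z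
          = lam₀ * (if 0 < u z.2 then u z.2 ^ μ else 0)) := by
  have key := deadcore_hasDerivAt μ lam₀ t₀ hμ hlam₀ u hu
  have hα0 : (1 / (1 - μ) : ℝ) ≠ 0 := by
    have : (0:ℝ) < 1 - μ := by have := hμ.2; linarith
    positivity
  have hzero : ∀ t : ℝ, t₀ ≤ t → u t = 0 := by
    intro t ht
    rw [hu]
    have hmax : max (t₀ - t) 0 = 0 := max_eq_right (by linarith)
    simp only [hmax, mul_zero]
    exact Real.zero_rpow hα0
  refine ⟨key, hzero, ?_⟩
  intro F hF p hp z
  have hgrad : spaceGrad (fun w : ESp n × ℝ => u w.2) z = 0 := by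
    simp only [spaceGrad]
    exact gradient_const z.1 (u z.2)
  have hhess : spaceHess (fun w : ESp n × ℝ => u w.2) z = 0 := by
    ext i j
    simp only [spaceHess, Matrix.of_apply]
    rw [iteratedFDeriv_const_of_ne (by norm_num : 2 ≠ 0) (u z.2)]
    rfl
  have htd : timeDeriv (fun w : ESp n × ℝ => u w.2) z = -(lam₀ * u z.2 ^ μ) := by
    simp only [timeDeriv]
    exact (key z.2).deriv
  rw [hgrad, hhess, hF, htd, mul_zero, zero_sub, neg_neg]
  have hunn : 0 ≤ u z.2 := by
    rw [hu]
    exact Real.rpow_nonneg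
      (mul_nonneg (mul_nonneg (by have := hμ.2; linarith) hlam₀.le) (le_max_right _ _)) _
  rcases hunn.lt_or_eq with h | h
  · rw [if_pos h]
  · rw [if_neg (by rw [← h]; exact lt_irrefl 0), ← h, Real.zero_rpow hμ.1.ne']


end
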